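/- Upper tail bound in expectation form: if i is hypergeometric with parameters N, M, n, then for all t ≥ 0, Pr[i ≥ E[i] + t·n] ≤ exp(−2t²n), where E[i] = n·M/N. -/

import Mathlib

open Finset


private lemma bernoulli_mgf_bound (p : ℝ) (hp0 : 0 ≤ p) (hp1 : p ≤ 1) (l : ℝ) (hl : 0 ≤ l) :
    1 - p + p * Real.exp l ≤ Real.exp (p * l + l ^ 2 / 8) := by
  rcases eq_or_lt_of_le hp0 with hp | hp
  · rw [← hp]
    simpa using Real.one_le_exp (by positivity)
  · set g : ℝ → ℝ := fun x => 1 - p + p * Real.exp x with hgdef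
    have gpos : ∀ x, 0 < g x := fun x => by
      have := Real.exp_pos x
      simp only [hgdef]
      nlinarith
    set f : ℝ → ℝ := fun x => p * x + x ^ 2 / 8 - Real.log (g x) with hfdef
    set f1 : ℝ → ℝ := fun x => p + x / 4 - p * Real.exp x / g x with hf1def
    have hdg : ∀ x, HasDerivAt g (p * Real.exp x) x := fun x => by
      exact ((Real.hasDerivAt_exp x).const_mul p).const_add (1 - p)
    have hdf : ∀ x, HasDerivAt f (f1 x) x := fun x => by
      have h1 : HasDerivAt (fun x : ℝ => p * x + x ^ 2 / 8) (p + x / 4) x := by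
        have := ((hasDerivAt_pow 2 x).div_const 8).const_add (p * x)
        have h0 : HasDerivAt (fun y : ℝ => p * y) p x := by
          simpa using (hasDerivAt_id x).const_mul p
        exact (h0.add (((hasDerivAt_pow 2 x).div_const 8))).congr_deriv (by norm_num; ring)
      have h2 : HasDerivAt (fun x => Real.log (g x)) (p * Real.exp x / g x) x :=
        (hdg x).log (gpos x).ne'
      exact h1.sub h2
    have hdf1 : ∀ x, HasDerivAt f1
        (1 / 4 - (p * Real.exp x * g x - p * Real.exp x * (p * Real.exp x)) / (g x) ^ 2) x := by
      intro x
      have hq : HasDerivAt (fun x => p * Real.exp x / g x)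
          ((p * Real.exp x * g x - p * Real.exp x * (p * Real.exp x)) / (g x) ^ 2) x :=
        ((Real.hasDerivAt_exp x).const_mul p).div (hdg x) (gpos x).ne'
      have hlin : HasDerivAt (fun x : ℝ => p + x / 4) (1 / 4) x := by
        simpa using ((hasDerivAt_id x).div_const 4).const_add p
      exact hlin.sub hq
    have hf1nonneg : ∀ x, 0 ≤ 1 / 4 - (p * Real.exp x * g x - p * Real.exp x * (p * Real.exp x)) / (g x) ^ 2 := by
      intro x
      rw [sub_nonneg, div_le_iff₀ (by have := gpos x; positivity : (0:ℝ) < (g x) ^ 2)]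
      have he := Real.exp_pos x
      have : g x = 1 - p + p * Real.exp x := rfl
      nlinarith [sq_nonneg ((1 - p) - p * Real.exp x)]
    have hm1 : MonotoneOn f1 (Set.Ici (0:ℝ)) := by
      apply monotoneOn_of_deriv_nonneg (convex_Ici 0)
      · exact fun x _ => (hdf1 x).differentiableAt.continuousAt.continuousWithinAt
      · exact fun x _ => (hdf1 x).differentiableAt.differentiableWithinAt
      · intro x _
        rw [(hdf1 x).deriv]
        exact hf1nonneg x
    have hf1zero : f1 0 = 0 := by
      simp only [hf1def, hgdef, Real.exp_zero, mul_one]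
      field_simp
      ring
    have hf1nn : ∀ x ∈ Set.Ici (0:ℝ), 0 ≤ f1 x := by
      intro x hx
      have := hm1 (Set.self_mem_Ici) hx hx
      rwa [hf1zero] at this
    have hm : MonotoneOn f (Set.Ici (0:ℝ)) := by
      apply monotoneOn_of_deriv_nonneg (convex_Ici 0)
      · exact fun x _ => (hdf x).differentiableAt.continuousAt.continuousWithinAt
      · exact fun x _ => (hdf x).differentiableAt.differentiableWithinAt
      · intro x hx
        rw [(hdf x).deriv]
        exact hf1nn x (le_of_lt (by simpa using hx))
    have hfzero : f 0 = 0 := by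
      simp [hfdef, hgdef]
    have hfl : 0 ≤ f l := by
      have := hm (Set.self_mem_Ici) hl hl
      rwa [hfzero] at this
    have hlog : Real.log (g l) ≤ p * l + l ^ 2 / 8 := by
      simp only [hfdef] at hfl
      linarith
    exact (Real.log_le_iff_le_exp (gpos l)).mp hlog



private lemma choose_helper (M i k : ℕ) (hk : k ≤ i) :
    i.choose k * M.choose i = M.choose k * (M - k).choose (i - k) := by
  rcases le_or_gt i M with h | h
  · rw [mul_comm, Nat.choose_mul hk]
  · rw [Nat.choose_eq_zero_of_lt h, mul_zero]
    rcases le_or_gt k M with hkM | hkM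
    · rw [Nat.choose_eq_zero_of_lt (by omega : M - k < i - k), mul_zero]
    · rw [Nat.choose_eq_zero_of_lt hkM, zero_mul]

private lemma sum_choose_eq (N M n k : ℕ) (hMN : M ≤ N) (hk : k ≤ n) :
    ∑ i ∈ range (n + 1), i.choose k * (M.choose i * (N - M).choose (n - i))
      = M.choose k * (N - k).choose (n - k) := by
  rcases le_or_gt k M with hkM | hkM
  · have hsub : Ico k (n + 1) ⊆ range (n + 1) := by
      intro x hx; simp only [mem_range, mem_Ico] at *; omega
    rw [← Finset.sum_subset hsub (by
      intro x hx hnx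
      simp only [mem_range, mem_Ico] at hx hnx
      rw [Nat.choose_eq_zero_of_lt (by omega), zero_mul])]
    rw [Finset.sum_Ico_eq_sum_range]
    have hstep : ∀ j ∈ range (n + 1 - k),
        (k + j).choose k * (M.choose (k + j) * (N - M).choose (n - (k + j)))
          = M.choose k * ((M - k).choose j * (N - M).choose (n - k - j)) := by
      intro j hj
      have h1 := choose_helper M (k + j) k (by omega)
      have h2 : (k + j) - k = j := by omega
      have h3 : n - (k + j) = n - k - j := by omega
      rw [← mul_assoc, h1, h2, h3, mul_assoc]
    rw [Finset.sum_congr rfl hstep, ← Finset.mul_sum]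
    congr 1
    have hrange : n + 1 - k = (n - k) + 1 := by omega
    rw [hrange]
    have hvdm := Nat.add_choose_eq (M - k) (N - M) (n - k)
    rw [Finset.Nat.sum_antidiagonal_eq_sum_range_succ_mk] at hvdm
    rw [← hvdm]
    congr 1
    omega
  · rw [Nat.choose_eq_zero_of_lt hkM, zero_mul]
    apply Finset.sum_eq_zero
    intro i hi
    rcases le_or_gt i M with h | h
    · rw [Nat.choose_eq_zero_of_lt (by omega : i < k), zero_mul]
    · rw [Nat.choose_eq_zero_of_lt h, zero_mul, mul_zero]

private lemma choose_ratio_le (k : ℕ) : ∀ M N : ℕ, M ≤ N →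
    (M.choose k : ℝ) * (N : ℝ) ^ k ≤ (N.choose k : ℝ) * (M : ℝ) ^ k := by
  induction k with
  | zero => intro M N _; simp
  | succ k ih =>
    intro M N hMN
    rcases Nat.eq_zero_or_pos M with hM | hM
    · subst hM
      rw [Nat.choose_eq_zero_of_lt (by omega)]
      simp
    · have hN : 0 < N := lt_of_lt_of_le hM hMN
      have hnatM : M * (M - 1).choose k = M.choose (k + 1) * (k + 1) := by
        have h := Nat.add_one_mul_choose_eq (M - 1) k
        rwa [Nat.sub_add_cancel hM] at h
      have hnatN : N * (N - 1).choose k = N.choose (k + 1) * (k + 1) := by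
        have h := Nat.add_one_mul_choose_eq (N - 1) k
        rwa [Nat.sub_add_cancel hN] at h
      have e1 : (M : ℝ) * ((M - 1).choose k : ℝ) = (M.choose (k + 1) : ℝ) * ((k : ℝ) + 1) := by
        exact_mod_cast hnatM
      have e2 : (N : ℝ) * ((N - 1).choose k : ℝ) = (N.choose (k + 1) : ℝ) * ((k : ℝ) + 1) := by
        exact_mod_cast hnatN
      have hmid : ((M - 1).choose k : ℝ) * (N : ℝ) ^ k ≤ ((N - 1).choose k : ℝ) * (M : ℝ) ^ k := by
        have ihh := ih (M - 1) (N - 1) (by omega)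
        rcases eq_or_lt_of_le (show 1 ≤ N from hN) with h1 | h1
        · have hM1 : M = 1 := by omega
          exact le_of_eq (by rw [hM1, ← h1])
        · have hb : (0 : ℝ) < ((N - 1 : ℕ) : ℝ) := by exact_mod_cast (by omega : 0 < N - 1)
          have hab : ((M - 1 : ℕ) : ℝ) * (N : ℝ) ≤ ((N - 1 : ℕ) : ℝ) * (M : ℝ) := by
            have h2 : (M - 1) * N ≤ (N - 1) * M := by
              rw [Nat.sub_mul, Nat.sub_mul, one_mul, one_mul, Nat.mul_comm N M]
              exact Nat.sub_le_sub_left hMN (M * N)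
            exact_mod_cast h2
          have key : (((M - 1 : ℕ) : ℝ) * (N : ℝ)) ^ k ≤ (((N - 1 : ℕ) : ℝ) * (M : ℝ)) ^ k :=
            pow_le_pow_left₀ (by positivity) hab k
          refine le_of_mul_le_mul_right ?_ (pow_pos hb k)
          calc ((M - 1).choose k : ℝ) * (N : ℝ) ^ k * ((N - 1 : ℕ) : ℝ) ^ k
              = (((M - 1).choose k : ℝ) * ((N - 1 : ℕ) : ℝ) ^ k) * (N : ℝ) ^ k := by ring
            _ ≤ (((N - 1).choose k : ℝ) * ((M - 1 : ℕ) : ℝ) ^ k) * (N : ℝ) ^ k :=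
                mul_le_mul_of_nonneg_right ihh (by positivity)
            _ = ((N - 1).choose k : ℝ) * (((M - 1 : ℕ) : ℝ) * (N : ℝ)) ^ k := by
                rw [mul_pow]; ring
            _ ≤ ((N - 1).choose k : ℝ) * (((N - 1 : ℕ) : ℝ) * (M : ℝ)) ^ k :=
                mul_le_mul_of_nonneg_left key (by positivity)
            _ = ((N - 1).choose k : ℝ) * (M : ℝ) ^ k * ((N - 1 : ℕ) : ℝ) ^ k := by
                rw [mul_pow]; ring
      refine le_of_mul_le_mul_left ?_ (show (0 : ℝ) < (k : ℝ) + 1 by positivity)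
      calc ((k : ℝ) + 1) * ((M.choose (k + 1) : ℝ) * (N : ℝ) ^ (k + 1))
          = ((M.choose (k + 1) : ℝ) * ((k : ℝ) + 1)) * (N : ℝ) ^ (k + 1) := by ring
        _ = ((M : ℝ) * ((M - 1).choose k : ℝ)) * (N : ℝ) ^ (k + 1) := by rw [e1]
        _ = ((M : ℝ) * (N : ℝ)) * (((M - 1).choose k : ℝ) * (N : ℝ) ^ k) := by ring
        _ ≤ ((M : ℝ) * (N : ℝ)) * (((N - 1).choose k : ℝ) * (M : ℝ) ^ k) :=
            mul_le_mul_of_nonneg_left hmid (by positivity)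
        _ = ((N : ℝ) * ((N - 1).choose k : ℝ)) * (M : ℝ) ^ (k + 1) := by ring
        _ = ((N.choose (k + 1) : ℝ) * ((k : ℝ) + 1)) * (M : ℝ) ^ (k + 1) := by rw [e2]
        _ = ((k : ℝ) + 1) * ((N.choose (k + 1) : ℝ) * (M : ℝ) ^ (k + 1)) := by ring


private lemma coeff_le (N M n k : ℕ) (hMN : M ≤ N) (hnN : n ≤ N) (hN : 0 < N) (hk : k ≤ n) :
    (M.choose k : ℝ) * ((N - k).choose (n - k) : ℝ)
      ≤ (N.choose n : ℝ) * (n.choose k : ℝ) * ((M : ℝ) / N) ^ k := by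
  have hB : (N.choose n : ℝ) * (n.choose k : ℝ)
      = (N.choose k : ℝ) * ((N - k).choose (n - k) : ℝ) := by
    exact_mod_cast Nat.choose_mul (n := N) hk
  rw [hB, div_pow, ← mul_div_assoc, le_div_iff₀ (by positivity : (0:ℝ) < (N:ℝ) ^ k)]
  have h1 := choose_ratio_le k M N hMN
  have h2 : (0:ℝ) ≤ ((N - k).choose (n - k) : ℝ) := by positivity
  nlinarith [mul_le_mul_of_nonneg_right h1 h2]

private lemma mgf_bound (N M n : ℕ) (hMN : M ≤ N) (hnN : n ≤ N) (hN : 0 < N)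
    (s : ℝ) (hs : 0 ≤ s) :
    ∑ i ∈ range (n + 1), (M.choose i * (N - M).choose (n - i) : ℝ) * (1 + s) ^ i
      ≤ (N.choose n : ℝ) * (1 + (M : ℝ) / N * s) ^ n := by
  calc ∑ i ∈ range (n + 1), (M.choose i * (N - M).choose (n - i) : ℝ) * (1 + s) ^ i
      = ∑ i ∈ range (n + 1), ∑ k ∈ range (n + 1),
          ((i.choose k : ℝ) * (M.choose i * (N - M).choose (n - i) : ℝ)) * s ^ k := by
        refine Finset.sum_congr rfl fun i hi => ?_
        have hin : i ≤ n := by simpa [Nat.lt_succ_iff] using hi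
        rw [add_comm (1:ℝ) s, add_pow]
        have hsub : range (i + 1) ⊆ range (n + 1) := by
          intro x hx; simp only [mem_range] at *; omega
        rw [← Finset.sum_subset hsub (by
          intro k hk hnk
          simp only [mem_range] at hk hnk
          rw [Nat.choose_eq_zero_of_lt (by omega : i < k)]
          simp)]
        rw [Finset.mul_sum]
        refine Finset.sum_congr rfl fun k hk => ?_
        rw [one_pow]
        ring
    _ = ∑ k ∈ range (n + 1),
          ((M.choose k : ℝ) * ((N - k).choose (n - k) : ℝ)) * s ^ k := by
        rw [Finset.sum_comm]
        refine Finset.sum_congr rfl fun k hk => ?_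
        have hkn : k ≤ n := by simpa [Nat.lt_succ_iff] using hk
        rw [← Finset.sum_mul]
        congr 1
        exact_mod_cast sum_choose_eq N M n k hMN hkn
    _ ≤ ∑ k ∈ range (n + 1),
          ((N.choose n : ℝ) * (n.choose k : ℝ) * ((M : ℝ) / N) ^ k) * s ^ k := by
        refine Finset.sum_le_sum fun k hk => ?_
        have hkn : k ≤ n := by simpa [Nat.lt_succ_iff] using hk
        exact mul_le_mul_of_nonneg_right (coeff_le N M n k hMN hnN hN hkn) (by positivity)
    _ = (N.choose n : ℝ) * (1 + (M : ℝ) / N * s) ^ n := by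
        rw [add_comm (1:ℝ) ((M : ℝ) / N * s), add_pow, Finset.mul_sum]
        refine Finset.sum_congr rfl fun k hk => ?_
        rw [one_pow, mul_pow]
        ring


open Classical in
theorem hypergeom_upper_tail_expectation (N M n : ℕ) (hMN : M ≤ N) (hnN : n ≤ N)
    (hN : 0 < N) (hn : 0 < n) (t : ℝ) (ht : 0 ≤ t) :
    ∑ i ∈ (Finset.range (n + 1)).filter
        (fun (i : ℕ) => (n : ℝ) * M / N + t * n ≤ (i : ℝ)),
        ((M.choose i * (N - M).choose (n - i) : ℝ) / (N.choose n : ℝ))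
      ≤ Real.exp (-2 * t ^ 2 * n) := by
  have hNR : (0:ℝ) < N := by exact_mod_cast hN
  set p : ℝ := (M : ℝ) / N with hp
  have hp0 : 0 ≤ p := by positivity
  have hp1 : p ≤ 1 := by
    rw [hp, div_le_one hNR]
    exact_mod_cast hMN
  set a : ℝ := (n : ℝ) * M / N + t * n with ha
  set y : ℝ := Real.exp (4 * t) with hy
  have hy1 : 1 ≤ y := Real.one_le_exp (by positivity)
  have hCpos : (0:ℝ) < (N.choose n : ℝ) := by exact_mod_cast Nat.choose_pos hnN
  have step1 : ∑ i ∈ (Finset.range (n + 1)).filter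
        (fun (i : ℕ) => (n : ℝ) * M / N + t * n ≤ (i : ℝ)),
        ((M.choose i * (N - M).choose (n - i) : ℝ) / (N.choose n : ℝ))
      ≤ ∑ i ∈ range (n + 1),
        ((M.choose i * (N - M).choose (n - i) : ℝ) / (N.choose n : ℝ))
          * Real.exp (4 * t * ((i : ℝ) - a)) := by
    refine le_trans (Finset.sum_le_sum fun i hi => ?_)
      (Finset.sum_le_sum_of_subset_of_nonneg (Finset.filter_subset _ _)
        (fun i _ _ => by positivity))
    simp only [Finset.mem_filter] at hi
    have hia : a ≤ (i : ℝ) := hi.2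
    have hexp : (1:ℝ) ≤ Real.exp (4 * t * ((i : ℝ) - a)) :=
      Real.one_le_exp (by nlinarith)
    nlinarith [hexp, div_nonneg (by positivity : (0:ℝ) ≤ (M.choose i * (N - M).choose (n - i) : ℝ)) hCpos.le]
  have step2 : ∑ i ∈ range (n + 1),
        ((M.choose i * (N - M).choose (n - i) : ℝ) / (N.choose n : ℝ))
          * Real.exp (4 * t * ((i : ℝ) - a))
      = Real.exp (-(4 * t * a)) * ∑ i ∈ range (n + 1),
        ((M.choose i * (N - M).choose (n - i) : ℝ)) * y ^ i / (N.choose n : ℝ) := by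
    rw [Finset.mul_sum]
    refine Finset.sum_congr rfl fun i hi => ?_
    rw [hy, ← Real.exp_nat_mul, show 4 * t * ((i : ℝ) - a) = (i : ℝ) * (4 * t) + -(4 * t * a) by ring,
      Real.exp_add]
    ring
  have step3 : ∑ i ∈ range (n + 1),
        ((M.choose i * (N - M).choose (n - i) : ℝ)) * y ^ i / (N.choose n : ℝ)
      ≤ (1 + p * (y - 1)) ^ n := by
    rw [← Finset.sum_div, div_le_iff₀ hCpos]
    have := mgf_bound N M n hMN hnN hN (y - 1) (by linarith)
    rw [show (1:ℝ) + (y - 1) = y by ring] at this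
    calc ∑ i ∈ range (n + 1), (M.choose i * (N - M).choose (n - i) : ℝ) * y ^ i
        ≤ (N.choose n : ℝ) * (1 + (M : ℝ) / N * (y - 1)) ^ n := this
      _ = (1 + p * (y - 1)) ^ n * (N.choose n : ℝ) := by rw [hp]; ring
  have step4 : (1 + p * (y - 1)) ^ n ≤ Real.exp ((n : ℝ) * (p * (4 * t) + (4 * t) ^ 2 / 8)) := by
    have hb := bernoulli_mgf_bound p hp0 hp1 (4 * t) (by positivity)
    have h1 : (1:ℝ) + p * (y - 1) = 1 - p + p * Real.exp (4 * t) := by rw [hy]; ring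
    rw [h1, Real.exp_nat_mul]
    exact pow_le_pow_left₀ (by nlinarith [Real.exp_pos (4 * t)]) hb n
  calc ∑ i ∈ (Finset.range (n + 1)).filter
        (fun (i : ℕ) => (n : ℝ) * M / N + t * n ≤ (i : ℝ)),
        ((M.choose i * (N - M).choose (n - i) : ℝ) / (N.choose n : ℝ))
      ≤ Real.exp (-(4 * t * a)) * ∑ i ∈ range (n + 1),
        ((M.choose i * (N - M).choose (n - i) : ℝ)) * y ^ i / (N.choose n : ℝ) := by
        rw [← step2]; exact step1
    _ ≤ Real.exp (-(4 * t * a)) * Real.exp ((n : ℝ) * (p * (4 * t) + (4 * t) ^ 2 / 8)) := by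
        refine mul_le_mul_of_nonneg_left (le_trans step3 step4) (Real.exp_pos _).le
    _ = Real.exp (-2 * t ^ 2 * n) := by
        rw [← Real.exp_add]
        congr 1
        rw [ha, hp]
        ring
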